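/- Let G be a connected graph of order n with diameter at most 2, and let x(x-λ_1)(x-λ_2)⋯(x-λ_{n-1}) be the characteristic polynomial of its Laplacian matrix L(G) (with λ_i the nonzero-indexed Laplacian eigenvalues, one root being 0). Then the characteristic polynomial of the distance Laplacian matrix D^L(G) is x·∏_{i=1}^{n-1}(x - (2n - λ_i)). Equivalently, the nonzero distance Laplacian eigenvalues are exactly 2n - λ_i for the Laplacian eigenvalues λ_1,...,λ_{n-1}. -/
import Mathlib


open Polynomial

-- The Laplacian matrix `L(G) = Deg(G) - A(G)` of a graph `G`.
open scoped Classical in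
noncomputable def lapMat {V : Type*} [Fintype V] (G : SimpleGraph V) : Matrix V V ℝ :=
  Matrix.diagonal (fun v => (G.degree v : ℝ)) -
    Matrix.of (fun u v => if G.Adj u v then (1 : ℝ) else 0)

/-- The distance Laplacian matrix `D^L(G) = Tr(G) - D(G)` of a graph `G`. -/
noncomputable def distLap {V : Type*} [Fintype V] [DecidableEq V] (G : SimpleGraph V) :
    Matrix V V ℝ :=
  Matrix.diagonal (fun v => ∑ u, (G.dist v u : ℝ)) - Matrix.of (fun u v => (G.dist u v : ℝ))

section Aux

variable {V : Type*} [Fintype V] [DecidableEq V] (G : SimpleGraph V)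

open scoped Classical

omit [Fintype V] in
lemma aux_dist_formula (hG : G.Connected) (hdiam : ∀ u v : V, G.dist u v ≤ 2) (u v : V) :
    (G.dist u v : ℝ) = 2 - (if u = v then 2 else 0) - (if G.Adj u v then 1 else 0) := by
  by_cases h : u = v
  · subst h
    simp [SimpleGraph.dist_self]
  · by_cases ha : G.Adj u v
    · rw [(SimpleGraph.dist_eq_one_iff_adj).mpr ha]
      simp [h, ha]
      norm_num
    · have h0 : 0 < G.dist u v := hG.pos_dist_of_ne h
      have h1 : G.dist u v ≠ 1 := fun hc => ha (SimpleGraph.dist_eq_one_iff_adj.mp hc)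
      have hd2 := hdiam u v
      have h2 : G.dist u v = 2 := by omega
      rw [h2]
      simp [h, ha]

lemma aux_deg (u : V) : ∑ v, (if G.Adj u v then (1:ℝ) else 0) = (G.degree u : ℝ) := by
  rw [Finset.sum_boole]
  congr 1
  rw [SimpleGraph.degree, SimpleGraph.neighborFinset_eq_filter]

lemma aux_rowsum (u : V) : ∑ v, lapMat G u v = 0 := by
  simp only [lapMat, Matrix.sub_apply, Matrix.diagonal_apply, Matrix.of_apply,
    Finset.sum_sub_distrib]
  rw [aux_deg, Finset.sum_eq_single u]
  · simp
  · intro b _ hb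
    exact if_neg fun h => hb h.symm
  · intro h
    exact absurd (Finset.mem_univ u) h

lemma aux_distsum (hG : G.Connected) (hdiam : ∀ u v : V, G.dist u v ≤ 2) (i : V) :
    ∑ u, (G.dist i u : ℝ) = 2 * (Fintype.card V : ℝ) - 2 - (G.degree i : ℝ) := by
  rw [Finset.sum_congr rfl (fun u _ => aux_dist_formula G hG hdiam i u)]
  simp only [Finset.sum_sub_distrib, Finset.sum_const, Finset.card_univ, nsmul_eq_mul,
    aux_deg, Finset.sum_ite_eq]
  simp [mul_comm]

end Aux

theorem stmt2 {V : Type*} [Fintype V] [DecidableEq V] (G : SimpleGraph V)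
    (hG : G.Connected) (n : ℕ) (hn : Fintype.card V = n)
    (hdiam : ∀ u v : V, G.dist u v ≤ 2)
    (lam : Fin (n - 1) → ℝ)
    (hL : (lapMat G).charpoly = X * ∏ i, (X - C (lam i))) :
    (distLap G).charpoly = X * ∏ i, (X - C (2 * (n : ℝ) - lam i)) := by
  classical
  haveI : Nonempty V := hG.nonempty
  have hn1 : 1 ≤ n := hn ▸ Fintype.card_pos
  set Jp : Matrix V V ℝ[X] := Matrix.of (fun _ _ => (1 : ℝ[X])) with hJp
  set Mp : Matrix V V ℝ[X] :=
    (X - C (2 * (n : ℝ))) • (1 : Matrix V V ℝ[X]) + (lapMat G).map C with hMp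
  have hMpe : ∀ i j, Mp i j
      = (if i = j then X - C (2 * (n : ℝ)) else 0) + C (lapMat G i j) := by
    intro i j
    by_cases h : i = j <;>
      simp [hMp, Matrix.one_apply, h]
  -- charmatrix of distLap
  have hcm : Matrix.charmatrix (distLap G) = Mp + (2 : ℝ[X]) • Jp := by
    refine Matrix.ext fun i j => ?_
    rw [Matrix.add_apply, Matrix.smul_apply, hMpe, hJp]
    by_cases h : i = j
    · subst h
      rw [Matrix.charmatrix_apply_eq]
      have hd : distLap G i i = 2 * (n : ℝ) - 2 - (G.degree i : ℝ) := by
        simp [distLap, SimpleGraph.dist_self, aux_distsum G hG hdiam i, hn]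
      have hl : lapMat G i i = (G.degree i : ℝ) := by
        simp [lapMat, SimpleGraph.irrefl]
      rw [hd, hl]
      simp only [if_pos rfl, Matrix.of_apply, smul_eq_mul, mul_one, map_sub, map_mul,
        map_ofNat, map_natCast, if_true]
      ring
    · rw [Matrix.charmatrix_apply_ne _ _ _ h]
      have hd : distLap G i j = -(2 - (if G.Adj i j then 1 else 0)) := by
        have := aux_dist_formula G hG hdiam i j
        simp only [distLap, Matrix.sub_apply, Matrix.diagonal_apply_ne _ h, Matrix.of_apply,
          this, if_neg h]
        ring
      have hl : lapMat G i j = -(if G.Adj i j then (1:ℝ) else 0) := by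
        simp [lapMat, Matrix.diagonal_apply, h]
      rw [hd, hl]
      simp only [if_neg h, Matrix.of_apply, smul_eq_mul, mul_one, map_neg, map_sub, map_ofNat,
        zero_add]
      by_cases ha : G.Adj i j <;> simp [ha] <;> ring
  -- M * J = (X - 2n) J
  have hMJ : Mp * Jp = (X - C (2 * (n : ℝ))) • Jp := by
    refine Matrix.ext fun i j => ?_
    have h1 : (Mp * Jp) i j = ∑ k, Mp i k := by
      simp [Matrix.mul_apply, hJp]
    rw [h1, Finset.sum_congr rfl (fun k _ => hMpe i k), Finset.sum_add_distrib,
      ← map_sum, aux_rowsum G i]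
    simp [hJp, Finset.sum_ite_eq]
  -- determinant of Mp via the Laplacian charpoly
  have hdetMp : X * Mp.det
      = (X - C (2 * (n:ℝ))) * (X * ∏ i, (X - C (2 * (n : ℝ) - lam i))) := by
    set ψ : ℝ[X] →ₐ[ℝ] ℝ[X] := aeval (C (2 * (n:ℝ)) - X) with hψ
    have hmapcm : (Matrix.charmatrix (lapMat G)).map ψ = -Mp := by
      refine Matrix.ext fun i j => ?_
      rw [Matrix.map_apply, Matrix.neg_apply, hMpe]
      by_cases h : i = j
      · subst h
        rw [Matrix.charmatrix_apply_eq]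
        simp [hψ, aeval_C]
        ring
      · rw [Matrix.charmatrix_apply_ne _ _ _ h]
        simp [hψ, aeval_C, h]
    have hdet : ψ ((lapMat G).charpoly) = (-1 : ℝ[X]) ^ (Fintype.card V) * Mp.det := by
      rw [Matrix.charpoly, AlgHom.map_det, AlgHom.mapMatrix_apply, hmapcm, Matrix.det_neg]
    rw [hL] at hdet
    have hdet2 : ψ (X * ∏ i, (X - C (lam i)))
        = (C (2 * (n:ℝ)) - X) * ∏ i, (C (2 * (n:ℝ)) - X - C (lam i)) := by
      rw [map_mul, map_prod]
      simp [hψ, aeval_C]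
    rw [hdet2] at hdet
    have hprod : ∏ i : Fin (n - 1), (C (2 * (n:ℝ)) - X - C (lam i))
        = (-1 : ℝ[X]) ^ (n - 1) * ∏ i, (X - C (2 * (n : ℝ) - lam i)) := by
      have h1 : ∀ i : Fin (n - 1), (C (2 * (n:ℝ)) - X - C (lam i))
          = (-1) * (X - C (2 * (n:ℝ) - lam i)) := by
        intro i; rw [map_sub]; ring
      rw [Finset.prod_congr rfl (fun i _ => h1 i), Finset.prod_mul_distrib, Finset.prod_const,
        Finset.card_univ, Fintype.card_fin]
    have hcard : (-1 : ℝ[X]) ^ (Fintype.card V) * ((-1 : ℝ[X]) ^ (n - 1) * -1) = 1 := by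
      have h2 : (-1 : ℝ[X]) ^ (n - 1) * (-1 : ℝ[X]) ^ (n - 1) = 1 := by
        rw [← mul_pow]; norm_num
      have h3 : (-1 : ℝ[X]) ^ n = (-1 : ℝ[X]) ^ (n - 1) * (-1) := by
        conv_lhs => rw [show n = (n - 1) + 1 from by omega]
        rw [pow_succ]
      rw [hn, h3]
      linear_combination h2
    have : (-1 : ℝ[X]) ^ (Fintype.card V) * ((-1 : ℝ[X]) ^ (Fintype.card V) * Mp.det)
        = (-1 : ℝ[X]) ^ (Fintype.card V) *
          ((C (2 * (n:ℝ)) - X) * ((-1 : ℝ[X]) ^ (n - 1) * ∏ i, (X - C (2 * (n : ℝ) - lam i)))) := by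
      rw [← hdet, hprod]
    have hMpdet : Mp.det
        = (X - C (2 * (n:ℝ))) * ∏ i, (X - C (2 * (n : ℝ) - lam i)) := by
      have hneg : (C (2 * (n:ℝ)) - X) = -1 * (X - C (2 * (n:ℝ))) := by ring
      calc Mp.det = ((-1 : ℝ[X]) ^ (Fintype.card V) * (-1 : ℝ[X]) ^ (Fintype.card V)) * Mp.det := by
            rw [← mul_pow]; norm_num
        _ = (-1 : ℝ[X]) ^ (Fintype.card V) *
              ((C (2 * (n:ℝ)) - X) * ((-1 : ℝ[X]) ^ (n - 1) * ∏ i, (X - C (2 * (n : ℝ) - lam i)))) := by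
            rw [mul_assoc, this]
        _ = ((-1 : ℝ[X]) ^ (Fintype.card V) * ((-1 : ℝ[X]) ^ (n - 1) * -1)) *
              ((X - C (2 * (n:ℝ))) * ∏ i, (X - C (2 * (n : ℝ) - lam i))) := by
            rw [hneg]; ring
        _ = (X - C (2 * (n:ℝ))) * ∏ i, (X - C (2 * (n : ℝ) - lam i)) := by
            rw [hcard, one_mul]
    rw [hMpdet]; ring
  -- now pass to the fraction field of ℝ[X]
  set F := FractionRing ℝ[X] with hF
  set f : ℝ[X] →+* F := algebraMap ℝ[X] F with hf
  have hinj : Function.Injective f := IsFractionRing.injective ℝ[X] F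
  set t : F := f (X - C (2 * (n:ℝ))) with ht0
  have ht : t ≠ 0 := by
    intro hc
    exact Polynomial.X_sub_C_ne_zero (2 * (n:ℝ)) (hinj (by rw [map_zero]; exact hc))
  set JF : Matrix V V F := Jp.map f with hJF
  set MF : Matrix V V F := Mp.map f with hMF
  have hMJf : MF * JF = t • JF := by
    refine Matrix.ext fun i j => ?_
    have h1 : (MF * JF) i j = f ((Mp * Jp) i j) := by
      simp [Matrix.mul_apply, hMF, hJF, Matrix.map_apply, map_sum, map_mul]
    rw [h1, hMJ]
    simp [Matrix.smul_apply, ht0, hJF, Matrix.map_apply, map_mul, smul_eq_mul]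
  have hfactor : MF + (2:F) • JF = MF * (1 + (2 * t⁻¹) • JF) := by
    rw [mul_add, mul_one, Matrix.mul_smul, hMJf, smul_smul]
    congr 2
    rw [mul_assoc, inv_mul_cancel₀ ht, mul_one]
  have hdet1 : (1 + (2 * t⁻¹) • JF).det = 1 + (Fintype.card V : F) * (2 * t⁻¹) := by
    have hcol : (2 * t⁻¹) • JF
        = Matrix.replicateCol Unit (fun _ => 2 * t⁻¹) * Matrix.replicateRow Unit (fun _ => (1:F)) := by
      refine Matrix.ext fun i j => ?_
      simp [Matrix.mul_apply, hJF, hJp, Matrix.map_apply]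
    rw [hcol, Matrix.det_one_add_replicateCol_mul_replicateRow]
    simp [dotProduct, Finset.card_univ]
  have h1 : f ((distLap G).charpoly)
      = MF.det * (1 + (Fintype.card V : F) * (2 * t⁻¹)) := by
    rw [Matrix.charpoly, RingHom.map_det, RingHom.mapMatrix_apply, hcm]
    have hmap : (Mp + (2 : ℝ[X]) • Jp).map f = MF + (2:F) • JF := by
      refine Matrix.ext fun i j => ?_
      simp [Matrix.map_apply, map_add, map_mul, map_ofNat, hMF, hJF, smul_eq_mul]
    rw [hmap, hfactor, Matrix.det_mul, hdet1]
  have h3 : t * (1 + (Fintype.card V : F) * (2 * t⁻¹)) = f X := by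
    have hX : f X = t + 2 * (Fintype.card V : F) := by
      have : f (C (2 * (n:ℝ))) = 2 * (Fintype.card V : F) := by
        rw [hn]
        have : C (2 * (n:ℝ)) = ((2 * n : ℕ) : ℝ[X]) := by
          push_cast [map_mul, map_natCast, map_ofNat]
          ring
        rw [this, map_natCast]
        push_cast
        ring
      rw [ht0, ← this, ← map_add]
      ring_nf
    calc t * (1 + (Fintype.card V : F) * (2 * t⁻¹))
        = t + 2 * (Fintype.card V : F) * (t * t⁻¹) := by ring
      _ = t + 2 * (Fintype.card V : F) := by rw [mul_inv_cancel₀ ht, mul_one]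
      _ = f X := hX.symm
  have key : f ((X - C (2 * (n:ℝ))) * (distLap G).charpoly)
      = f ((X - C (2 * (n:ℝ))) * (X * ∏ i, (X - C (2 * (n : ℝ) - lam i)))) := by
    rw [map_mul, h1, ← ht0, ← mul_assoc, mul_comm t MF.det, mul_assoc, h3]
    have hMdet : MF.det = f (Mp.det) := by
      rw [hMF, RingHom.map_det, RingHom.mapMatrix_apply]
    rw [hMdet, ← map_mul, mul_comm Mp.det (X : ℝ[X]), hdetMp]
  have key2 := hinj key
  exact mul_left_cancel₀ (Polynomial.X_sub_C_ne_zero (2 * (n:ℝ))) key2
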